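/- arXiv:1311.4864 — 2 statements merged into one kernel-verified Lean document; each statement's English description precedes it below -/
import Mathlib

section
/- If C = g_0, g_1, ..., g_{N-1} is a cyclic constant-weight Gray code of weight 2 for the (1,2,n)-LRM scheme (i.e., a sequence of N distinct binary words of length n, each of Hamming weight 2, where each g_{i+1} is obtained from g_i by replacing some cyclic window (j, j+1 mod n) holding the pattern (1,0) with (0,1), and g_0 is similarly obtained from g_{N-1}), then N ≤ 2n. -/
set_option maxHeartbeats 1000000

def LRMTrans {n : ℕ} [NeZero n] (g g' : Fin n → Bool) : Prop :=
  ∃ j : Fin n, g j = true ∧ g (j + 1) = false ∧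
    g' j = false ∧ g' (j + 1) = true ∧
    ∀ i : Fin n, i ≠ j → i ≠ j + 1 → g' i = g i

def tokAux {n : ℕ} [NeZero n] (j : ℕ → Fin n) (init : Fin n × Fin n) : ℕ → Fin n × Fin n
  | 0 => init
  | t+1 =>
    let s := tokAux j init t
    (if s.1 = j t then j t + 1 else s.1, if s.2 = j t then j t + 1 else s.2)

def cntAux {n : ℕ} [NeZero n] (j : ℕ → Fin n) (init : Fin n × Fin n) : ℕ → ℕ
  | 0 => 0
  | t+1 => cntAux j init t + (if (tokAux j init t).1 = j t then 1 else 0)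

lemma tokAux_succ {n : ℕ} [NeZero n] (j : ℕ → Fin n) (init : Fin n × Fin n) (t : ℕ) :
    tokAux j init (t+1) =
      (if (tokAux j init t).1 = j t then j t + 1 else (tokAux j init t).1,
       if (tokAux j init t).2 = j t then j t + 1 else (tokAux j init t).2) := rfl

lemma cntAux_succ {n : ℕ} [NeZero n] (j : ℕ → Fin n) (init : Fin n × Fin n) (t : ℕ) :
    cntAux j init (t+1) = cntAux j init t + (if (tokAux j init t).1 = j t then 1 else 0) := rfl

-- Fin helpers
lemma fin_val_one {n : ℕ} [NeZero n] (hn : 3 ≤ n) : (1 : Fin n).val = 1 := by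
  rw [Fin.val_one']; exact Nat.mod_eq_of_lt (by omega)

lemma fin_add_one_val {n : ℕ} [NeZero n] (hn : 3 ≤ n) (x : Fin n) (h : x.val + 1 < n) :
    (x + 1).val = x.val + 1 := by
  rw [Fin.val_add, fin_val_one hn, Nat.mod_eq_of_lt h]

lemma fin_sub_one_val {n : ℕ} [NeZero n] (hn : 3 ≤ n) (x : Fin n) (h : 1 ≤ x.val) :
    (x - 1).val = x.val - 1 := by
  rw [Fin.sub_def, fin_val_one hn]
  show (n - 1 + x.val) % n = x.val - 1
  have hx := x.isLt
  have he : n - 1 + x.val = n + (x.val - 1) := by omega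
  rw [he, Nat.add_mod_left]
  exact Nat.mod_eq_of_lt (by omega)

lemma fin_eq_one_of_val {n : ℕ} [NeZero n] (hn : 3 ≤ n) (x : Fin n) (h : x.val = 1) :
    x = 1 := by
  apply Fin.ext; rw [h, fin_val_one hn]

open Fin.CommRing in
theorem aux_main {n : ℕ} [NeZero n] (hn : 3 ≤ n) {N : ℕ} (hN : 0 < N)
    (G : ℕ → Fin n → Bool)
    (hinj : ∀ t t' : ℕ, G t = G t' ↔ t % N = t' % N)
    (htr : ∀ t : ℕ, LRMTrans (G t) (G (t+1)))
    (hsupp0 : ∃ a b : Fin n, a ≠ b ∧ ∀ i, G 0 i = true ↔ (i = a ∨ i = b)) :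
    N ≤ 2 * n := by
  classical
  have npos : 0 < n := by omega
  obtain ⟨a0, b0, hab0, hs0⟩ := hsupp0
  let j : ℕ → Fin n := fun t => (htr t).choose
  have jspec : ∀ t, G t (j t) = true ∧ G t (j t + 1) = false ∧
      G (t+1) (j t) = false ∧ G (t+1) (j t + 1) = true ∧
      ∀ i : Fin n, i ≠ j t → i ≠ j t + 1 → G (t+1) i = G t i :=
    fun t => (htr t).choose_spec
  let u : ℕ → Fin n := fun t => (tokAux j (a0, b0) t).1
  let v : ℕ → Fin n := fun t => (tokAux j (a0, b0) t).2
  let c : ℕ → ℕ := fun t => cntAux j (a0, b0) t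
  have hu0 : u 0 = a0 := rfl
  have hv0 : v 0 = b0 := rfl
  have hc0 : c 0 = 0 := rfl
  have hustep : ∀ t, u (t+1) = if u t = j t then j t + 1 else u t := fun t => by
    show (tokAux j (a0,b0) (t+1)).1 = _
    rw [tokAux_succ]
  have hvstep : ∀ t, v (t+1) = if v t = j t then j t + 1 else v t := fun t => by
    show (tokAux j (a0,b0) (t+1)).2 = _
    rw [tokAux_succ]
  have hcstep : ∀ t, c (t+1) = c t + if u t = j t then 1 else 0 := fun t => cntAux_succ _ _ _
  have haddne : ∀ x : Fin n, x + 1 ≠ x := by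
    intro x h
    have := congrArg Fin.val h
    rw [Fin.val_add, fin_val_one hn] at this
    have hx := x.isLt
    rcases Nat.lt_or_ge (x.val + 1) n with h1 | h1
    · rw [Nat.mod_eq_of_lt h1] at this; omega
    · have hxe : x.val + 1 = n := by omega
      rw [hxe, Nat.mod_self] at this; omega
  -- main invariant
  have INV : ∀ t, u t ≠ v t ∧ (∀ i, G t i = true ↔ (i = u t ∨ i = v t)) := by
    intro t
    induction t with
    | zero => exact ⟨by rw [hu0, hv0]; exact hab0, by rw [hu0, hv0]; exact hs0⟩
    | succ t ih =>
      obtain ⟨hne, hsup⟩ := ih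
      obtain ⟨hj1, hj2, hj3, hj4, hj5⟩ := jspec t
      have hjuv : j t = u t ∨ j t = v t := (hsup (j t)).1 hj1
      have hj1u : j t + 1 ≠ u t := by
        intro h; rw [← h] at hsup
        have := (hsup (j t + 1)).2 (Or.inl rfl); rw [this] at hj2; exact absurd hj2 (by simp)
      have hj1v : j t + 1 ≠ v t := by
        intro h; rw [← h] at hsup
        have := (hsup (j t + 1)).2 (Or.inr rfl); rw [this] at hj2; exact absurd hj2 (by simp)
      have hne1 : j t + 1 ≠ j t := haddne _
      rcases hjuv with hju | hjv
      · have hvne : v t ≠ j t := by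
          intro h; exact hne (by rw [h, ← hju])
        have hu' : u (t+1) = j t + 1 := by rw [hustep, if_pos hju.symm]
        have hv' : v (t+1) = v t := by rw [hvstep, if_neg hvne]
        refine ⟨by rw [hu', hv']; exact hj1v, ?_⟩
        intro i
        rw [hu', hv']
        by_cases hi1 : i = j t + 1
        · subst hi1; simp [hj4]
        by_cases hi2 : i = j t
        · subst hi2
          simp only [hj3]
          constructor
          · intro h; exact absurd h (by simp)
          · rintro (h | h)
            · exact absurd h.symm hne1
            · exact absurd h.symm hvne
        · rw [hj5 i hi2 hi1, hsup i, ← hju]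
          constructor
          · rintro (h | h)
            · exact absurd h hi2
            · exact Or.inr h
          · rintro (h | h)
            · exact absurd h hi1
            · exact Or.inr h
      · have hune : u t ≠ j t := by rw [← hjv] at hne; exact fun h => hne (by rw [h])
        have hv' : v (t+1) = j t + 1 := by rw [hvstep, if_pos hjv.symm]
        have hu' : u (t+1) = u t := by rw [hustep, if_neg hune]
        refine ⟨by rw [hu', hv']; exact fun h => hj1u h.symm, ?_⟩
        intro i
        rw [hu', hv']
        by_cases hi1 : i = j t + 1
        · subst hi1; simp [hj4]
        by_cases hi2 : i = j t
        · subst hi2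
          simp only [hj3]
          constructor
          · intro h; exact absurd h (by simp)
          · rintro (h | h)
            · exact absurd h.symm hune
            · exact absurd h.symm hne1
        · rw [hj5 i hi2 hi1, hsup i, ← hjv]
          constructor
          · rintro (h | h)
            · exact Or.inl h
            · exact absurd h hi2
          · rintro (h | h)
            · exact Or.inl h
            · exact absurd h hi1
  have honeof : ∀ t, (u t = j t ∧ v t ≠ j t) ∨ (v t = j t ∧ u t ≠ j t) := by
    intro t
    obtain ⟨hne, hsup⟩ := INV t
    rcases (hsup (j t)).1 (jspec t).1 with h | h
    · exact Or.inl ⟨h.symm, fun hv => hne (by rw [← h, ← hv])⟩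
    · exact Or.inr ⟨h.symm, fun hu => hne (by rw [← h, ← hu])⟩

  -- token position formulas
  have hufor : ∀ t, u t = u 0 + (c t : Fin n) := by
    intro t
    induction t with
    | zero => simp [hc0]
    | succ t ih =>
      rw [hustep, hcstep]
      rcases honeof t with ⟨h1, h2⟩ | ⟨h1, h2⟩
      · rw [if_pos h1, if_pos h1, ← h1, ih]
        push_cast
        ring
      · rw [if_neg h2, if_neg h2, ih]
        push_cast
        ring
  have hvfor : ∀ t, v t + (c t : Fin n) = v 0 + (t : Fin n) := by
    intro t
    induction t with
    | zero => simp [hc0]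
    | succ t ih =>
      rw [hvstep, hcstep]
      rcases honeof t with ⟨h1, h2⟩ | ⟨h1, h2⟩
      · rw [if_pos h1, if_neg h2]
        push_cast
        push_cast at ih
        linear_combination ih
      · rw [if_pos h1, if_neg h2, ← h1]
        push_cast
        push_cast at ih
        linear_combination ih
  let d : ℕ → ℕ := fun t => (v t - u t : Fin n).val
  have hdlb : ∀ t, 1 ≤ d t := by
    intro t
    have hne := (INV t).1
    have h0 : v t - u t ≠ 0 := sub_ne_zero.mpr (Ne.symm hne)
    have h1 : (v t - u t).val ≠ 0 := fun h => h0 (Fin.ext (by simp [h]))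
    show 1 ≤ (v t - u t : Fin n).val
    omega
  have hdub : ∀ t, d t ≤ n - 1 := by
    intro t
    have := (v t - u t).isLt
    show (v t - u t : Fin n).val ≤ n - 1
    omega
  have hdz : ∀ t, (d t : ℤ) = d 0 + t - 2 * c t := by
    intro t
    induction t with
    | zero => simp [hc0]
    | succ t ih =>
      obtain ⟨hne, hsup⟩ := INV t
      obtain ⟨hj1, hj2, hj3, hj4, hj5⟩ := jspec t
      rcases honeof t with ⟨h1, h2⟩ | ⟨h1, h2⟩
      · -- u moves
        have hu' : u (t+1) = j t + 1 := by rw [hustep, if_pos h1]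
        have hv' : v (t+1) = v t := by rw [hvstep, if_neg h2]
        have hc' : c (t+1) = c t + 1 := by rw [hcstep, if_pos h1]
        have hvu : v t ≠ u t + 1 := by
          intro h
          rw [h1] at h
          rw [← h] at hj2
          have := (hsup (v t)).2 (Or.inr rfl)
          rw [this] at hj2; exact absurd hj2 (by simp)
        have hd1 : d t ≠ 1 := by
          intro h
          apply hvu
          have hvu1 : v t - u t = 1 := fin_eq_one_of_val hn _ h
          have := sub_eq_iff_eq_add.mp hvu1
          rw [this]; ring
        have hsub : v (t+1) - u (t+1) = (v t - u t) - 1 := by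
          rw [hu', hv', ← h1]; ring
        have hval : d (t+1) = d t - 1 := by
          show (v (t+1) - u (t+1)).val = (v t - u t).val - 1
          rw [hsub]
          exact fin_sub_one_val hn _ (hdlb t)
        have h1le := hdlb t
        rw [hval, hc']
        push_cast [Nat.cast_sub h1le]
        push_cast at ih
        linarith
      · -- v moves
        have hv' : v (t+1) = v t + 1 := by rw [hvstep, if_pos h1, ← h1]
        have hu' : u (t+1) = u t := by rw [hustep, if_neg h2]
        have hc' : c (t+1) = c t := by rw [hcstep, if_neg h2]; omega
        have huv : u t ≠ v t + 1 := by
          intro h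
          rw [h1] at h
          rw [← h] at hj2
          have := (hsup (u t)).2 (Or.inl rfl)
          rw [this] at hj2; exact absurd hj2 (by simp)
        have hdn1 : d t ≠ n - 1 := by
          intro h
          apply huv
          have hw : v t - u t = (⟨n - 1, by omega⟩ : Fin n) := Fin.ext h
          have hw1 : (⟨n - 1, by omega⟩ : Fin n) + 1 = 0 := by
            apply Fin.ext
            rw [Fin.val_add, fin_val_one hn]
            show (n - 1 + 1) % n = (0 : Fin n).val
            have : n - 1 + 1 = n := by omega
            rw [this, Nat.mod_self]
            rfl
          have hw2 : (⟨n - 1, by omega⟩ : Fin n) = -1 := eq_neg_of_add_eq_zero_left hw1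
          rw [hw2] at hw
          have : v t = -1 + u t := sub_eq_iff_eq_add.mp hw
          rw [this]; ring
        have hsub : v (t+1) - u (t+1) = (v t - u t) + 1 := by
          rw [hu', hv']; ring
        have hval : d (t+1) = d t + 1 := by
          show (v (t+1) - u (t+1)).val = (v t - u t).val + 1
          rw [hsub]
          apply fin_add_one_val hn
          have hb1 := hdub t
          have hb2 := hdn1
          have hb3 := hdlb t
          have hb4 : d t = (v t - u t : Fin n).val := rfl
          omega
        rw [hval, hc']
        push_cast
        push_cast at ih
        linarith
  have hdstep : ∀ t, (d (t+1) : ℤ) = d t + 1 ∨ (d (t+1) : ℤ) = d t - 1 := by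
    intro t
    have h1 := hdz t
    have h2 := hdz (t+1)
    rw [hcstep] at h2
    by_cases h : u t = j t
    · rw [if_pos h] at h2; right; push_cast at h1 h2 ⊢; linarith
    · rw [if_neg h] at h2; left; push_cast at h1 h2 ⊢; linarith

  -- translate Fin equalities into integer congruences
  have hcast : ∀ a b : ℕ, ((a : Fin n) = (b : Fin n)) ↔ (n:ℤ) ∣ (b:ℤ) - a :=
    fun a b => (CharP.natCast_eq_natCast (Fin n) n).trans Nat.modEq_iff_dvd
  have hGpair : ∀ t t', G t = G t' ↔
      ((u t' = u t ∧ v t' = v t) ∨ (u t' = v t ∧ v t' = u t)) := by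
    intro t t'
    obtain ⟨hne, hsup⟩ := INV t
    obtain ⟨hne', hsup'⟩ := INV t'
    constructor
    · intro h
      have h1 : G t (u t') = true := by rw [h]; exact (hsup' _).2 (Or.inl rfl)
      have h2 : G t (v t') = true := by rw [h]; exact (hsup' _).2 (Or.inr rfl)
      rcases (hsup _).1 h1 with e1 | e1 <;> rcases (hsup _).1 h2 with e2 | e2
      · exact absurd (e1.trans e2.symm) hne'
      · exact Or.inl ⟨e1, e2⟩
      · exact Or.inr ⟨e1, e2⟩
      · exact absurd (e1.trans e2.symm) hne'
    · intro h
      funext i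
      have hi := hsup i
      have hi' := hsup' i
      have hiff : G t i = true ↔ G t' i = true := by
        rw [hi, hi']
        rcases h with ⟨e1, e2⟩ | ⟨e1, e2⟩
        · rw [e1, e2]
        · rw [e1, e2]; exact or_comm
      cases hb : G t i <;> cases hb' : G t' i
      · rfl
      · exact absurd (hb.symm.trans (hiff.mpr hb')) Bool.false_ne_true
      · exact absurd (hb'.symm.trans (hiff.mp hb)) Bool.false_ne_true
      · rfl
  have hvformula : ∀ t, v t = v 0 + (t : Fin n) - (c t : Fin n) := fun t => by
    have h := hvfor t
    linear_combination h
  have hv00 : v 0 = u 0 + ((d 0 : ℕ) : Fin n) := by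
    have h : ((d 0 : ℕ) : Fin n) = v 0 - u 0 := Fin.cast_val_eq_self _
    rw [h]; ring
  have uEq : ∀ t t', u t' = u t ↔ (n:ℤ) ∣ (c t : ℤ) - c t' := by
    intro t t'
    have base := hcast (c t') (c t)
    rw [hufor t, hufor t', add_right_inj]
    exact base
  have vEq : ∀ t t', v t' = v t ↔ (n:ℤ) ∣ ((t:ℤ) + c t') - ((t':ℤ) + c t) := by
    intro t t'
    have base := hcast (t' + c t) (t + c t')
    push_cast at base
    rw [← base, hvformula t, hvformula t']
    constructor
    · intro h; push_cast; linear_combination h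
    · intro h; push_cast at h; linear_combination h
  have uvEq : ∀ t t', u t' = v t ↔ (n:ℤ) ∣ ((d 0 : ℤ) + t) - ((c t' : ℤ) + c t) := by
    intro t t'
    have base := hcast (c t' + c t) (d 0 + t)
    push_cast at base
    rw [← base, hufor t', hvformula t, hv00]
    constructor
    · intro h; push_cast; linear_combination h
    · intro h; push_cast at h; linear_combination h
  have vuEq : ∀ t t', v t' = u t ↔ (n:ℤ) ∣ ((c t : ℤ) + c t') - ((d 0 : ℤ) + t') := by
    intro t t'
    have base := hcast (d 0 + t') (c t + c t')
    push_cast at base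
    rw [← base, hufor t, hvformula t', hv00]
    constructor
    · intro h; push_cast; linear_combination h
    · intro h; push_cast at h; linear_combination h
  -- the folded gap value
  let F : ℕ → ℕ := fun t => if (t / n) % 2 = 0 then d t else n - d t
  have hFval : ∀ t, ((t/n) % 2 = 0 ∧ (F t : ℤ) = d t) ∨ ((t/n) % 2 = 1 ∧ (F t : ℤ) = n - d t) := by
    intro t
    rcases Nat.mod_two_eq_zero_or_one (t/n) with h | h
    · refine Or.inl ⟨h, ?_⟩
      show ((if (t / n) % 2 = 0 then d t else n - d t : ℕ) : ℤ) = d t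
      rw [if_pos h]
    · refine Or.inr ⟨h, ?_⟩
      show ((if (t / n) % 2 = 0 then d t else n - d t : ℕ) : ℤ) = n - d t
      rw [if_neg (by omega)]
      exact Nat.cast_sub (le_trans (hdub t) (by omega))
  have hnz : (n:ℤ) ≠ 0 := by exact_mod_cast npos.ne'
  have hcancel : ∀ x y : ℤ, (n:ℤ) * x = (n:ℤ) * y → x = y := fun x y h => mul_left_cancel₀ hnz h
  have hsmall : ∀ z : ℤ, (n:ℤ) ∣ z → -(n:ℤ) < z → z < (n:ℤ) → z = 0 := by
    intro z hz h1 h2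
    exact Int.eq_zero_of_abs_lt_dvd hz (abs_lt.mpr ⟨h1, h2⟩)
  -- the key characterization
  have char : ∀ t t', G t = G t' ↔ (t % n = t' % n ∧ F t = F t') := by
    intro t t'
    have e1 : (t:ℤ) = (n:ℤ) * ((t/n : ℕ) : ℤ) + ((t % n : ℕ) : ℤ) := by
      exact_mod_cast congrArg (Nat.cast : ℕ → ℤ) (Nat.div_add_mod t n).symm
    have e1' : (t':ℤ) = (n:ℤ) * ((t'/n : ℕ) : ℤ) + ((t' % n : ℕ) : ℤ) := by
      exact_mod_cast congrArg (Nat.cast : ℕ → ℤ) (Nat.div_add_mod t' n).symm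
    have hdzt := hdz t
    have hdzt' := hdz t'
    have hb1 : (1:ℤ) ≤ (d t : ℤ) := by exact_mod_cast hdlb t
    have hb1' : (1:ℤ) ≤ (d t' : ℤ) := by exact_mod_cast hdlb t'
    have hb2 : (d t : ℤ) ≤ (n:ℤ) - 1 := by have := hdub t; omega
    have hb2' : (d t' : ℤ) ≤ (n:ℤ) - 1 := by have := hdub t'; omega
    have hnz3 : (3:ℤ) ≤ (n:ℤ) := by exact_mod_cast hn
    constructor
    · intro h
      rcases (hGpair t t').1 h with ⟨eu, ev⟩ | ⟨eu, ev⟩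
      · obtain ⟨k1, hk1⟩ := (uEq t t').mp eu
        obtain ⟨k2, hk2⟩ := (vEq t t').mp ev
        have hdd : (d t' : ℤ) = d t := by
          have hz := hsmall ((d t' : ℤ) - d t) ⟨k1 - k2, by linarith⟩ (by linarith) (by linarith)
          linarith
        have hres : t % n = t' % n := by
          have : t ≡ t' [MOD n] := Nat.modEq_iff_dvd.mpr ⟨-(k1 + k2), by linarith⟩
          exact this
        refine ⟨hres, ?_⟩
        -- quotient parity
        have hresz : ((t % n : ℕ) : ℤ) = ((t' % n : ℕ) : ℤ) := by exact_mod_cast hres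
        have hqq : ((t'/n : ℕ) : ℤ) - ((t/n : ℕ) : ℤ) = -2 * k1 := by
          apply hcancel
          calc (n:ℤ) * (((t'/n : ℕ) : ℤ) - ((t/n : ℕ) : ℤ)) = (t':ℤ) - t := by
                rw [e1, e1', hresz]; ring
            _ = (n:ℤ) * (-2 * k1) := by linarith
        have hq2 : (t/n) % 2 = (t'/n) % 2 := by
          have : (t/n) ≡ (t'/n) [MOD 2] := Nat.modEq_iff_dvd.mpr ⟨-k1, by rw [hqq]; push_cast; ring⟩
          exact this
        rcases hFval t with ⟨hp, hv⟩ | ⟨hp, hv⟩ <;> rcases hFval t' with ⟨hp', hv'⟩ | ⟨hp', hv'⟩ <;> omega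
      · obtain ⟨k1, hk1⟩ := (uvEq t t').mp eu
        obtain ⟨k2, hk2⟩ := (vuEq t t').mp ev
        have hsum : (d t : ℤ) + d t' = n := by
          have hz := hsmall ((d t : ℤ) + d t' - n) ⟨k1 - k2 - 1, by linarith⟩ (by linarith) (by linarith)
          linarith
        have hres : t % n = t' % n := by
          have : t ≡ t' [MOD n] := Nat.modEq_iff_dvd.mpr ⟨-(k1 + k2), by linarith⟩
          exact this
        refine ⟨hres, ?_⟩
        have hresz : ((t % n : ℕ) : ℤ) = ((t' % n : ℕ) : ℤ) := by exact_mod_cast hres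
        have hk12 : k1 - k2 = 1 := by
          apply hcancel
          have : (n:ℤ) * (k1 - k2 - 1) = 0 := by linarith
          linarith
        have hqq : ((t'/n : ℕ) : ℤ) - ((t/n : ℕ) : ℤ) = -(2 * k2 + 1) := by
          apply hcancel
          calc (n:ℤ) * (((t'/n : ℕ) : ℤ) - ((t/n : ℕ) : ℤ)) = (t':ℤ) - t := by
                rw [e1, e1', hresz]; ring
            _ = (n:ℤ) * (-(2 * k2 + 1)) := by linarith
        have hq2 : (t/n) % 2 ≠ (t'/n) % 2 := by
          intro hq
          have : (t/n) ≡ (t'/n) [MOD 2] := hq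
          obtain ⟨s, hs⟩ := Nat.modEq_iff_dvd.mp this
          rw [hqq] at hs
          have h2s : (-(2 * k2 + 1) : ℤ) = ((2:ℕ):ℤ) * s := hs
          push_cast at h2s
          omega
        rcases hFval t with ⟨hp, hv⟩ | ⟨hp, hv⟩ <;> rcases hFval t' with ⟨hp', hv'⟩ | ⟨hp', hv'⟩ <;> omega
    · rintro ⟨hres, hFF⟩
      have hresz : ((t % n : ℕ) : ℤ) = ((t' % n : ℕ) : ℤ) := by exact_mod_cast hres
      have hT : (t':ℤ) - t = ((t'/n : ℕ) : ℤ) * n - ((t/n : ℕ) : ℤ) * n := by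
        rw [e1, e1', hresz]; ring
      have hFFz : (F t : ℤ) = F t' := by exact_mod_cast hFF
      rcases hFval t with ⟨hp, hv⟩ | ⟨hp, hv⟩ <;> rcases hFval t' with ⟨hp', hv'⟩ | ⟨hp', hv'⟩
      · -- both even blocks
        have hdd : (d t' : ℤ) = d t := by omega
        obtain ⟨s, hs⟩ : ∃ s : ℤ, ((t'/n : ℕ) : ℤ) - ((t/n : ℕ) : ℤ) = 2 * s :=
          ⟨((t'/n : ℕ) : ℤ)/2 - ((t/n : ℕ) : ℤ)/2, by omega⟩
        have hT2 : (t':ℤ) - t = 2 * (s * n) := by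
          have h3 : ((t'/n : ℕ) : ℤ) * n - ((t/n : ℕ) : ℤ) * n = 2 * (s * n) := by
            linear_combination (n:ℤ) * hs
          linarith
        have hcc : (c t' : ℤ) - c t = s * n := by
          apply mul_left_cancel₀ (two_ne_zero (α := ℤ))
          linarith
        refine (hGpair t t').2 (Or.inl ⟨(uEq t t').mpr ⟨-s, by linarith⟩,
          (vEq t t').mpr ⟨-s, by linarith⟩⟩)
      · -- mixed parity
        have hsum : (d t : ℤ) + d t' = n := by omega
        obtain ⟨s, hs⟩ : ∃ s : ℤ, ((t'/n : ℕ) : ℤ) - ((t/n : ℕ) : ℤ) = 2 * s + 1 :=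
          ⟨(((t'/n : ℕ) : ℤ) - ((t/n : ℕ) : ℤ) - 1)/2, by omega⟩
        have hT2 : (t':ℤ) - t = 2 * (s * n) + n := by
          have h3 : ((t'/n : ℕ) : ℤ) * n - ((t/n : ℕ) : ℤ) * n = 2 * (s * n) + n := by
            linear_combination (n:ℤ) * hs
          linarith
        have hC : 2 * ((c t : ℤ) + c t') = 2 * (d 0 : ℤ) + t + t' - n := by linarith
        have hw1 : ((d 0 : ℤ) + t) - ((c t' : ℤ) + c t) = (n:ℤ) * (-s) := by
          apply mul_left_cancel₀ (two_ne_zero (α := ℤ))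
          linarith
        have hw2 : ((c t : ℤ) + c t') - ((d 0 : ℤ) + t') = (n:ℤ) * (-(s+1)) := by
          apply mul_left_cancel₀ (two_ne_zero (α := ℤ))
          linarith
        exact (hGpair t t').2 (Or.inr ⟨(uvEq t t').mpr ⟨-s, hw1⟩, (vuEq t t').mpr ⟨-(s+1), hw2⟩⟩)
      · -- mixed parity (other order)
        have hsum : (d t : ℤ) + d t' = n := by omega
        obtain ⟨s, hs⟩ : ∃ s : ℤ, ((t'/n : ℕ) : ℤ) - ((t/n : ℕ) : ℤ) = 2 * s + 1 :=
          ⟨(((t'/n : ℕ) : ℤ) - ((t/n : ℕ) : ℤ) - 1)/2, by omega⟩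
        have hT2 : (t':ℤ) - t = 2 * (s * n) + n := by
          have h3 : ((t'/n : ℕ) : ℤ) * n - ((t/n : ℕ) : ℤ) * n = 2 * (s * n) + n := by
            linear_combination (n:ℤ) * hs
          linarith
        have hC : 2 * ((c t : ℤ) + c t') = 2 * (d 0 : ℤ) + t + t' - n := by linarith
        have hw1 : ((d 0 : ℤ) + t) - ((c t' : ℤ) + c t) = (n:ℤ) * (-s) := by
          apply mul_left_cancel₀ (two_ne_zero (α := ℤ))
          linarith
        have hw2 : ((c t : ℤ) + c t') - ((d 0 : ℤ) + t') = (n:ℤ) * (-(s+1)) := by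
          apply mul_left_cancel₀ (two_ne_zero (α := ℤ))
          linarith
        exact (hGpair t t').2 (Or.inr ⟨(uvEq t t').mpr ⟨-s, hw1⟩, (vuEq t t').mpr ⟨-(s+1), hw2⟩⟩)
      · -- both odd blocks
        have hdd : (d t' : ℤ) = d t := by omega
        obtain ⟨s, hs⟩ : ∃ s : ℤ, ((t'/n : ℕ) : ℤ) - ((t/n : ℕ) : ℤ) = 2 * s :=
          ⟨((t'/n : ℕ) : ℤ)/2 - ((t/n : ℕ) : ℤ)/2, by omega⟩
        have hT2 : (t':ℤ) - t = 2 * (s * n) := by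
          have h3 : ((t'/n : ℕ) : ℤ) * n - ((t/n : ℕ) : ℤ) * n = 2 * (s * n) := by
            linear_combination (n:ℤ) * hs
          linarith
        have hcc : (c t' : ℤ) - c t = s * n := by
          apply mul_left_cancel₀ (two_ne_zero (α := ℤ))
          linarith
        refine (hGpair t t').2 (Or.inl ⟨(uEq t t').mpr ⟨-s, by linarith⟩,
          (vEq t t').mpr ⟨-s, by linarith⟩⟩)

  -- combine with injectivity of the code
  have key : ∀ t t' : ℕ, t % N = t' % N ↔ (t % n = t' % n ∧ F t = F t') := by
    intro t t'
    rw [← hinj, char]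
  have hdvdnN : n ∣ N := by
    have h := (key N 0).mp (by rw [Nat.mod_self, Nat.zero_mod])
    have h1 := h.1
    rw [Nat.zero_mod] at h1
    exact Nat.dvd_of_mod_eq_zero h1
  obtain ⟨m, hm⟩ := hdvdnN
  have mpos : 0 < m := by
    rcases Nat.eq_zero_or_pos m with h | h
    · rw [h, Nat.mul_zero] at hm; omega
    · exact h
  have hFper : ∀ t, F (t + N) = F t := by
    intro t
    exact ((key (t + N) t).mp (by rw [Nat.add_mod_right])).2
  let p : ℕ → ℕ := fun k => F (k * n)
  have hknmod : ∀ k, (k * n) % N = (k % m) * n := by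
    intro k
    have h1 : k * n = N * (k / m) + (k % m) * n := by
      rw [hm]
      conv_lhs => rw [← Nat.div_add_mod k m]
      ring
    rw [h1, Nat.mul_add_mod]
    apply Nat.mod_eq_of_lt
    rw [hm]
    calc (k % m) * n < m * n := (Nat.mul_lt_mul_right npos).mpr (Nat.mod_lt k mpos)
      _ = n * m := Nat.mul_comm m n
  have hpinj : ∀ k l, p k = p l ↔ k % m = l % m := by
    intro k l
    constructor
    · intro h
      have hres : (k * n) % n = (l * n) % n := by
        rw [Nat.mul_mod_left, Nat.mul_mod_left]
      have h2 := (key (k*n) (l*n)).mpr ⟨hres, h⟩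
      rw [hknmod, hknmod] at h2
      exact Nat.eq_of_mul_eq_mul_right npos h2
    · intro h
      have h2 : (k*n) % N = (l*n) % N := by rw [hknmod, hknmod, h]
      exact ((key (k*n) (l*n)).mp h2).2
  have hFne : ∀ k l r, k % m ≠ l % m → F (k*n + r) ≠ F (l*n + r) := by
    intro k l r hkl h
    have hres : (k*n + r) % n = (l*n + r) % n := by
      rw [Nat.mul_comm k n, Nat.mul_comm l n, Nat.mul_add_mod, Nat.mul_add_mod]
    have hNmod := (key (k*n + r) (l*n + r)).mpr ⟨hres, h⟩
    have h2 : k*n + r ≡ l*n + r [MOD N] := hNmod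
    have h3 : k*n ≡ l*n [MOD N] := Nat.ModEq.add_right_cancel' r h2
    have h4 : (k*n) % N = (l*n) % N := h3
    rw [hknmod, hknmod] at h4
    exact hkl (Nat.eq_of_mul_eq_mul_right npos h4)
  -- parity of F along a column
  have hFeven : ∀ t t', t % n = t' % n → ∃ w : ℤ, (F t : ℤ) - F t' = 2 * w := by
    intro t t' hres
    have e1 : (t:ℤ) = (n:ℤ) * ((t/n : ℕ) : ℤ) + ((t % n : ℕ) : ℤ) := by
      exact_mod_cast congrArg (Nat.cast : ℕ → ℤ) (Nat.div_add_mod t n).symm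
    have e1' : (t':ℤ) = (n:ℤ) * ((t'/n : ℕ) : ℤ) + ((t' % n : ℕ) : ℤ) := by
      exact_mod_cast congrArg (Nat.cast : ℕ → ℤ) (Nat.div_add_mod t' n).symm
    have hresz : ((t % n : ℕ) : ℤ) = ((t' % n : ℕ) : ℤ) := by exact_mod_cast hres
    have hdzt := hdz t
    have hdzt' := hdz t'
    rcases hFval t with ⟨hp, hv⟩ | ⟨hp, hv⟩ <;> rcases hFval t' with ⟨hp', hv'⟩ | ⟨hp', hv'⟩
    · obtain ⟨a, ha⟩ : ∃ a:ℤ, ((t/n : ℕ):ℤ) = 2*a := ⟨((t/n : ℕ):ℤ)/2, by omega⟩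
      obtain ⟨b, hb⟩ : ∃ b:ℤ, ((t'/n : ℕ):ℤ) = 2*b := ⟨((t'/n : ℕ):ℤ)/2, by omega⟩
      have hT2 : (t:ℤ) - t' = 2*((n:ℤ)*a - (n:ℤ)*b) := by rw [e1, e1', ha, hb, hresz]; ring
      exact ⟨(n:ℤ)*a - (n:ℤ)*b - c t + c t', by linarith⟩
    · obtain ⟨a, ha⟩ : ∃ a:ℤ, ((t/n : ℕ):ℤ) = 2*a := ⟨((t/n : ℕ):ℤ)/2, by omega⟩
      obtain ⟨b, hb⟩ : ∃ b:ℤ, ((t'/n : ℕ):ℤ) = 2*b+1 := ⟨(((t'/n : ℕ):ℤ)-1)/2, by omega⟩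
      have hS : (t:ℤ) + t' = 2*((n:ℤ)*a + (n:ℤ)*b + ((t' % n : ℕ) : ℤ)) + n := by
        rw [e1, e1', ha, hb, hresz]; ring
      exact ⟨(d 0 : ℤ) + (n:ℤ)*a + (n:ℤ)*b + ((t' % n : ℕ) : ℤ) - c t - c t', by linarith⟩
    · obtain ⟨a, ha⟩ : ∃ a:ℤ, ((t/n : ℕ):ℤ) = 2*a+1 := ⟨(((t/n : ℕ):ℤ)-1)/2, by omega⟩
      obtain ⟨b, hb⟩ : ∃ b:ℤ, ((t'/n : ℕ):ℤ) = 2*b := ⟨((t'/n : ℕ):ℤ)/2, by omega⟩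
      have hS : (t:ℤ) + t' = 2*((n:ℤ)*a + (n:ℤ)*b + ((t' % n : ℕ) : ℤ)) + n := by
        rw [e1, e1', ha, hb, hresz]; ring
      exact ⟨-(d 0 : ℤ) - (n:ℤ)*a - (n:ℤ)*b - ((t' % n : ℕ) : ℤ) + c t + c t', by linarith⟩
    · obtain ⟨a, ha⟩ : ∃ a:ℤ, ((t/n : ℕ):ℤ) = 2*a+1 := ⟨(((t/n : ℕ):ℤ)-1)/2, by omega⟩
      obtain ⟨b, hb⟩ : ∃ b:ℤ, ((t'/n : ℕ):ℤ) = 2*b+1 := ⟨(((t'/n : ℕ):ℤ)-1)/2, by omega⟩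
      have hT2 : (t':ℤ) - t = 2*((n:ℤ)*b - (n:ℤ)*a) := by rw [e1, e1', ha, hb, hresz]; ring
      exact ⟨(n:ℤ)*b - (n:ℤ)*a + c t - c t', by linarith⟩
  -- step lemmas for F
  have hFstep : ∀ t, (t+1) % n ≠ 0 → ((F (t+1) : ℤ) = F t + 1 ∨ (F (t+1) : ℤ) = F t - 1) := by
    intro t ht
    have hq : (t+1)/n = t/n := by
      rw [Nat.succ_div, if_neg (fun hd => ht (Nat.mod_eq_zero_of_dvd hd))]
      omega
    rcases hdstep t with hd1 | hd1 <;>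
      rcases hFval t with ⟨hp, hv⟩ | ⟨hp, hv⟩ <;>
      rcases hFval (t+1) with ⟨hp', hv'⟩ | ⟨hp', hv'⟩ <;>
      rw [hq] at hp' <;> omega
  have hFbound : ∀ t, (t+1) % n = 0 →
      ((F (t+1) : ℤ) + F t = n + 1 ∨ (F (t+1) : ℤ) + F t = n - 1) := by
    intro t ht
    have hq : (t+1)/n = t/n + 1 := by
      rw [Nat.succ_div, if_pos (Nat.dvd_of_mod_eq_zero ht)]
    rcases hdstep t with hd1 | hd1 <;>
      rcases hFval t with ⟨hp, hv⟩ | ⟨hp, hv⟩ <;>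
      rcases hFval (t+1) with ⟨hp', hv'⟩ | ⟨hp', hv'⟩ <;>
      rw [hq] at hp' <;> omega
  -- the crossing lemma
  have hcross : ∀ k l, k % m ≠ l % m → (p k < p l ↔ p (l+1) < p (k+1)) := by
    intro k l hkl
    have hcol : ∀ r, (k*n + r) % n = (l*n + r) % n := by
      intro r
      rw [Nat.mul_comm k n, Nat.mul_comm l n, Nat.mul_add_mod, Nat.mul_add_mod]
    have hstrand : ∀ r, r ≤ n - 1 → (F (k*n) < F (l*n) ↔ F (k*n + r) < F (l*n + r)) := by
      intro r hr
      induction r with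
      | zero => simp
      | succ r ih =>
        have hih := ih (by omega)
        have hbndk : (k*n + r + 1) % n ≠ 0 := by
          have h1 : k*n + r + 1 = n*k + (r+1) := by ring
          rw [h1, Nat.mul_add_mod, Nat.mod_eq_of_lt (show r+1 < n by omega)]
          omega
        have hbndl : (l*n + r + 1) % n ≠ 0 := by
          have h1 : l*n + r + 1 = n*l + (r+1) := by ring
          rw [h1, Nat.mul_add_mod, Nat.mod_eq_of_lt (show r+1 < n by omega)]
          omega
        have hA := hFstep (k*n + r) hbndk
        have hB := hFstep (l*n + r) hbndl
        obtain ⟨w, hw⟩ := hFeven (k*n + r) (l*n + r) (hcol r)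
        have hne0 := hFne k l r hkl
        have hne1 : F (k*n + r + 1) ≠ F (l*n + r + 1) := hFne k l (r+1) hkl
        rw [hih]
        show F (k*n + r) < F (l*n + r) ↔ F (k*n + r + 1) < F (l*n + r + 1)
        rcases hA with hA | hA <;> rcases hB with hB | hB <;>
          constructor <;> intro hlt <;> omega
    have harg : ∀ kk : ℕ, kk*n + (n-1) + 1 = (kk+1)*n := by
      intro kk
      have h1 : n - 1 + 1 = n := by omega
      calc kk*n + (n-1) + 1 = kk*n + ((n-1) + 1) := by rw [Nat.add_assoc]
        _ = kk*n + n := by rw [h1]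
        _ = (kk+1)*n := by ring
    have hbk : (k*n + (n-1) + 1) % n = 0 := by rw [harg k, Nat.mul_mod_left]
    have hbl : (l*n + (n-1) + 1) % n = 0 := by rw [harg l, Nat.mul_mod_left]
    have hA := hFbound (k*n + (n-1)) hbk
    have hB := hFbound (l*n + (n-1)) hbl
    rw [harg k] at hA
    rw [harg l] at hB
    have hkl1 : (k+1) % m ≠ (l+1) % m := fun h => hkl (Nat.ModEq.add_right_cancel' 1 h)
    have hlast := hstrand (n-1) le_rfl
    obtain ⟨w, hw⟩ := hFeven (k*n + (n-1)) (l*n + (n-1)) (hcol (n-1))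
    have hneL := hFne k l (n-1) hkl
    have hneT : F ((k+1)*n) ≠ F ((l+1)*n) := fun h => hkl1 ((hpinj (k+1) (l+1)).mp h)
    show F (k*n) < F (l*n) ↔ F ((l+1)*n) < F ((k+1)*n)
    rw [hlast]
    rcases hA with hA | hA <;> rcases hB with hB | hB <;>
      constructor <;> intro hlt <;> omega
  -- endgame: suppose N > 2n
  by_contra hbig
  push_neg at hbig
  have hm3 : 3 ≤ m := by
    by_contra hm'
    push_neg at hm'
    have h2 : N ≤ n * 2 := by rw [hm]; exact Nat.mul_le_mul_left n (by omega)
    omega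
  let rk : ℕ → ℕ := fun k => ((Finset.range m).filter (fun l => p l < p k)).card
  have hpmod : ∀ k, p (k % m) = p k :=
    fun k => (hpinj _ _).mpr (Nat.mod_mod_of_dvd k dvd_rfl)
  have hrklt : ∀ k k', p k < p k' → rk k < rk k' := by
    intro k k' h
    apply Finset.card_lt_card
    have hsub : (Finset.range m).filter (fun l => p l < p k) ⊆
        (Finset.range m).filter (fun l => p l < p k') :=
      Finset.monotone_filter_right _ (fun l _ hl => lt_trans hl h)
    rw [Finset.ssubset_iff_of_subset hsub]
    refine ⟨k % m, ?_, ?_⟩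
    · simp only [Finset.mem_filter, Finset.mem_range]
      exact ⟨Nat.mod_lt k mpos, by rw [hpmod]; exact h⟩
    · simp only [Finset.mem_filter, Finset.mem_range]
      rintro ⟨-, hlt⟩
      rw [hpmod] at hlt
      exact lt_irrefl _ hlt
  have hflip : ∀ k, rk (k+1) + rk k + 1 = m := by
    intro k
    have hstep1 : rk (k+1) = ((Finset.range m).filter (fun l => p k < p l)).card := by
      apply Finset.card_bij' (i := fun l _ => (l + (m-1)) % m) (j := fun l _ => (l + 1) % m)
      · -- maps into
        intro l hl
        simp only [Finset.mem_filter, Finset.mem_range] at hl ⊢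
        obtain ⟨hlm, hlt⟩ := hl
        refine ⟨Nat.mod_lt _ mpos, ?_⟩
        have hinc : ((l + (m-1)) % m + 1) % m = l % m := by
          rw [Nat.mod_add_mod, Nat.add_assoc, (by omega : m - 1 + 1 = m), Nat.add_mod_right]
        have hpl2 : p ((l + (m-1)) % m + 1) = p l := (hpinj _ _).mpr hinc
        have hne : k % m ≠ ((l + (m-1)) % m) % m := by
          intro he
          have h2 : p ((l + (m-1)) % m + 1) = p (k+1) := by
            apply (hpinj _ _).mpr
            rw [← Nat.mod_add_mod ((l + (m-1)) % m) m 1, ← Nat.mod_add_mod k m 1, he]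
          rw [hpl2] at h2
          rw [h2] at hlt
          exact lt_irrefl _ hlt
        exact (hcross k ((l + (m-1)) % m) hne).mpr (by rw [hpl2]; exact hlt)
      · -- inverse maps into
        intro l hl
        simp only [Finset.mem_filter, Finset.mem_range] at hl ⊢
        obtain ⟨hlm, hlt⟩ := hl
        refine ⟨Nat.mod_lt _ mpos, ?_⟩
        have hne : k % m ≠ l % m := by
          intro he
          have h2 : p l = p k := (hpinj _ _).mpr he.symm
          rw [h2] at hlt
          exact lt_irrefl _ hlt
        rw [hpmod (l+1)]
        exact (hcross k l hne).mp hlt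
      · -- left inverse
        intro l hl
        simp only [Finset.mem_filter, Finset.mem_range] at hl
        rw [Nat.mod_add_mod, Nat.add_assoc, (by omega : m - 1 + 1 = m), Nat.add_mod_right,
          Nat.mod_eq_of_lt hl.1]
      · -- right inverse
        intro l hl
        simp only [Finset.mem_filter, Finset.mem_range] at hl
        rw [Nat.mod_add_mod, Nat.add_assoc, (by omega : 1 + (m-1) = m), Nat.add_mod_right,
          Nat.mod_eq_of_lt hl.1]
    have hsplit : ((Finset.range m).filter (fun l => p l < p k)).card +
        ((Finset.range m).filter (fun l => ¬ p l < p k)).card = m := by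
      rw [Finset.card_filter_add_card_filter_not, Finset.card_range]
    have hnegsplit : ((Finset.range m).filter (fun l => ¬ p l < p k)).card =
        ((Finset.range m).filter (fun l => p k < p l)).card + 1 := by
      have h1 : (Finset.range m).filter (fun l => ¬ p l < p k) =
          ((Finset.range m).filter (fun l => p k < p l)) ∪ {k % m} := by
        ext l
        simp only [Finset.mem_filter, Finset.mem_range, Finset.mem_union,
          Finset.mem_singleton, not_lt]
        constructor
        · rintro ⟨hlm, hge⟩
          rcases Nat.lt_or_ge (p k) (p l) with hlt | hge2
          · exact Or.inl ⟨hlm, hlt⟩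
          · have heq : p l = p k := le_antisymm hge2 hge
            have := (hpinj l k).mp heq
            rw [Nat.mod_eq_of_lt hlm] at this
            exact Or.inr this
        · rintro (⟨hlm, hlt⟩ | rfl)
          · exact ⟨hlm, le_of_lt hlt⟩
          · exact ⟨Nat.mod_lt _ mpos, le_of_eq (hpmod k).symm⟩
      rw [h1, Finset.card_union_of_disjoint, Finset.card_singleton]
      rw [Finset.disjoint_singleton_right]
      simp only [Finset.mem_filter, Finset.mem_range]
      rintro ⟨-, hlt⟩
      rw [hpmod] at hlt
      exact lt_irrefl _ hlt
    have hrkdef : rk k = ((Finset.range m).filter (fun l => p l < p k)).card := rfl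
    rw [hstep1]
    omega
  have h02 : p 0 ≠ p 2 := by
    intro h
    have h2 := (hpinj 0 2).mp h
    rw [Nat.zero_mod, Nat.mod_eq_of_lt (by omega)] at h2
    omega
  have e0 : rk 1 + rk 0 + 1 = m := hflip 0
  have e1f : rk 2 + rk 1 + 1 = m := hflip 1
  have e02 : rk 0 = rk 2 := by omega
  rcases lt_trichotomy (p 0) (p 2) with h | h | h
  · have := hrklt 0 2 h; omega
  · exact h02 h
  · have := hrklt 2 0 h; omega

theorem stmt_4 (n N : ℕ) [NeZero n] [NeZero N] (hn : 3 ≤ n)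
    (g : Fin N → (Fin n → Bool))
    (hdist : Function.Injective g)
    (hw : ∀ i : Fin N, (Finset.univ.filter (fun j => g i j = true)).card = 2)
    (htrans : ∀ i : Fin N, LRMTrans (g i) (g (i + 1))) :
    N ≤ 2 * n := by
  have hN : 0 < N := Nat.pos_of_ne_zero (NeZero.ne N)
  apply aux_main hn hN (fun t => g ⟨t % N, Nat.mod_lt t hN⟩)
  · intro t t'
    constructor
    · intro h
      have := hdist h
      exact congrArg Fin.val this
    · intro h
      have : (⟨t % N, Nat.mod_lt t hN⟩ : Fin N) = ⟨t' % N, Nat.mod_lt t' hN⟩ := Fin.ext h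
      simp only [this]
  · intro t
    have h := htrans ⟨t % N, Nat.mod_lt t hN⟩
    have he : (⟨t % N, Nat.mod_lt t hN⟩ : Fin N) + 1 = ⟨(t+1) % N, Nat.mod_lt (t+1) hN⟩ := by
      apply Fin.ext
      rw [Fin.val_add]
      simp only [Fin.val_one']
      rw [Nat.mod_add_mod]
      rw [Nat.add_mod t (1 % N) N, Nat.mod_mod_of_dvd 1 (dvd_refl N), ← Nat.add_mod]
    rwa [he] at h
  · have h := hw ⟨0 % N, Nat.mod_lt 0 hN⟩
    obtain ⟨a, b, hab, hset⟩ := Finset.card_eq_two.mp h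
    refine ⟨a, b, hab, fun i => ?_⟩
    have : i ∈ Finset.univ.filter (fun j => g ⟨0 % N, Nat.mod_lt 0 hN⟩ j = true) ↔ i ∈ ({a, b} : Finset (Fin n)) := by rw [hset]
    simpa using this
end

section
/- Any cyclic constant-weight Gray code of weight 2 for the (1,2,n)-LRM scheme has size N ≤ binom(n,2) − (n−3)(n−5)/8. -/
namespace Stmt6Aux

open scoped Fin.CommRing

def idx (N : ℕ) [NeZero N] (t : ℕ) : Fin N := ⟨t % N, Nat.mod_lt _ (Nat.pos_of_ne_zero (NeZero.ne N))⟩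

lemma idx_succ (N : ℕ) [NeZero N] (t : ℕ) : idx N (t+1) = idx N t + 1 := by
  apply Fin.ext
  show (t+1) % N = ((idx N t) + 1).val
  rw [Fin.add_def]
  show (t+1) % N = (t % N + (1 : Fin N).val) % N
  have h1 : (1 : Fin N).val = 1 % N := rfl
  rw [h1]
  exact Nat.add_mod t 1 N

lemma idx_add_period (N : ℕ) [NeZero N] (t : ℕ) : idx N (t + N) = idx N t := by
  apply Fin.ext
  show (t + N) % N = t % N
  simp [Nat.add_mod]

lemma idx_zero (N : ℕ) [NeZero N] : idx N 0 = 0 := by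
  apply Fin.ext
  show 0 % N = (0 : Fin N).val
  simp

def wk (n N : ℕ) [NeZero n] [NeZero N] (J : Fin N → Fin n) (p : ℤ × ℤ) : ℕ → ℤ × ℤ
  | 0 => p
  | t+1 => let w := wk n N J p t
           if ((w.1 : Fin n) = J (idx N t)) then (w.1 + 1, w.2) else (w.1, w.2 + 1)

lemma wk_succ_pos (n N : ℕ) [NeZero n] [NeZero N] (J : Fin N → Fin n) (p : ℤ × ℤ) (t : ℕ)
    (h : ((wk n N J p t).1 : Fin n) = J (idx N t)) :
    wk n N J p (t+1) = ((wk n N J p t).1 + 1, (wk n N J p t).2) := by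
  rw [wk, if_pos h]

lemma wk_succ_neg (n N : ℕ) [NeZero n] [NeZero N] (J : Fin N → Fin n) (p : ℤ × ℤ) (t : ℕ)
    (h : ¬ ((wk n N J p t).1 : Fin n) = J (idx N t)) :
    wk n N J p (t+1) = ((wk n N J p t).1, (wk n N J p t).2 + 1) := by
  rw [wk, if_neg h]

lemma res_eq_iff (n : ℕ) [NeZero n] (x y : ℤ) :
    ((x : Fin n) = (y : Fin n)) ↔ (n:ℤ) ∣ (x - y) := by
  constructor
  · intro h
    have h2 : ((x - y : ℤ) : Fin n) = 0 := by push_cast; rw [h]; ring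
    exact (CharP.intCast_eq_zero_iff (Fin n) n _).mp h2
  · intro h
    have h2 : ((x - y : ℤ) : Fin n) = 0 := (CharP.intCast_eq_zero_iff (Fin n) n _).mpr h
    have h3 : (x : Fin n) - (y : Fin n) = 0 := by push_cast at h2; linear_combination h2
    linear_combination h3

lemma ivt_up (f : ℕ → ℤ) (hf : ∀ t, f (t+1) ≤ f t + 1) (v : ℤ) :
    ∀ e : ℕ, f 0 ≤ v → v ≤ f e → ∃ t, t ≤ e ∧ f t = v := by
  intro e
  induction e with
  | zero => intro h1 h2; exact ⟨0, le_refl 0, le_antisymm h1 h2⟩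
  | succ e ih =>
    intro h1 h2
    by_cases hc : v ≤ f e
    · obtain ⟨t, ht, hft⟩ := ih h1 hc
      exact ⟨t, Nat.le_succ_of_le ht, hft⟩
    · push_neg at hc
      have := hf e
      exact ⟨e+1, le_refl _, by omega⟩

lemma ivt_up' (f : ℕ → ℤ) (hf : ∀ t, f (t+1) ≤ f t + 1) (v : ℤ) (s e : ℕ)
    (hse : s ≤ e) (h1 : f s ≤ v) (h2 : v ≤ f e) : ∃ t, s ≤ t ∧ t ≤ e ∧ f t = v := by
  have key : ∀ u, (fun u => f (s + u)) (u+1) ≤ (fun u => f (s+u)) u + 1 := by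
    intro u
    show f (s + (u+1)) ≤ f (s + u) + 1
    rw [← Nat.add_assoc]
    exact hf (s+u)
  obtain ⟨u, hu, hfu⟩ := ivt_up (fun u => f (s + u)) key v (e - s)
    (by show f (s+0) ≤ v; rw [Nat.add_zero]; exact h1)
    (by show v ≤ f (s + (e - s)); rw [show s + (e - s) = e by omega]; exact h2)
  refine ⟨s + u, Nat.le_add_right _ _, by omega, hfu⟩

lemma ivt_down' (f : ℕ → ℤ) (hf : ∀ t, f t ≤ f (t+1) + 1) (v : ℤ) (s e : ℕ)
    (hse : s ≤ e) (h1 : v ≤ f s) (h2 : f e ≤ v) : ∃ t, s ≤ t ∧ t ≤ e ∧ f t = v := by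
  have key : ∀ u, (fun u => -(f u)) (u+1) ≤ (fun u => -(f u)) u + 1 := by
    intro u; have := hf u; simp only; omega
  obtain ⟨t, ht1, ht2, ht3⟩ := ivt_up' (fun u => -(f u)) key (-v) s e hse
    (by beta_reduce; omega) (by beta_reduce; omega)
  refine ⟨t, ht1, ht2, by omega⟩

lemma natval_cast (n : ℕ) [NeZero n] (j : Fin n) : (((j.val : ℤ)) : Fin n) = j := by
  push_cast
  rfl

theorem key (n N : ℕ) [NeZero n] [NeZero N] (g : Fin N → Fin n → Bool)
    (hdist : Function.Injective g)
    (J O : Fin N → Fin n)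
    (hword : ∀ i x, g i x = true ↔ x = J i ∨ x = O i)
    (hOJ : ∀ i, O i ≠ J i)
    (hOJ1 : ∀ i, O i ≠ J i + 1)
    (htr : ∀ i x, g (i+1) x = true ↔ x = J i + 1 ∨ x = O i)
    (hN : 2*n < N) : False := by
  have hnpos : 0 < n := Nat.pos_of_ne_zero (NeZero.ne n)
  have hNpos : 0 < N := Nat.pos_of_ne_zero (NeZero.ne N)
  set p : ℤ × ℤ := (((J 0).val : ℤ), ((O 0).val : ℤ)) with hp
  set A : ℕ → ℤ := fun t => (wk n N J p t).1 with hA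
  set B : ℕ → ℤ := fun t => (wk n N J p t).2 with hB
  have hstep_pos : ∀ t, ((A t : Fin n) = J (idx N t)) → A (t+1) = A t + 1 ∧ B (t+1) = B t := by
    intro t h
    constructor
    · show (wk n N J p (t+1)).1 = _
      rw [wk_succ_pos n N J p t h]
    · show (wk n N J p (t+1)).2 = _
      rw [wk_succ_pos n N J p t h]
  have hstep_neg : ∀ t, ¬((A t : Fin n) = J (idx N t)) → A (t+1) = A t ∧ B (t+1) = B t + 1 := by
    intro t h
    constructor
    · show (wk n N J p (t+1)).1 = _
      rw [wk_succ_neg n N J p t h]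
    · show (wk n N J p (t+1)).2 = _
      rw [wk_succ_neg n N J p t h]
  have hdich : ∀ t, (A (t+1) = A t + 1 ∧ B (t+1) = B t) ∨ (A (t+1) = A t ∧ B (t+1) = B t + 1) := by
    intro t
    by_cases h : ((A t : Fin n) = J (idx N t))
    · exact Or.inl (hstep_pos t h)
    · exact Or.inr (hstep_neg t h)
  have hsum : ∀ t : ℕ, A t + B t = A 0 + B 0 + t := by
    intro t; induction t with
    | zero => push_cast; ring
    | succ t ih =>
      rcases hdich t with ⟨h1,h2⟩|⟨h1,h2⟩ <;> rw [h1, h2] <;> push_cast <;> linarith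
  have hInv : ∀ t, ((A t : Fin n) ≠ (B t : Fin n)) ∧
      (∀ x : Fin n, g (idx N t) x = true ↔ x = (A t : Fin n) ∨ x = (B t : Fin n)) := by
    intro t; induction t with
    | zero =>
      have e1 : ((A 0 : ℤ) : Fin n) = J 0 := natval_cast n (J 0)
      have e2 : ((B 0 : ℤ) : Fin n) = O 0 := natval_cast n (O 0)
      rw [idx_zero, e1, e2]
      constructor
      · intro h; exact hOJ 0 h.symm
      · intro x; exact hword 0 x
    | succ t ih =>
      obtain ⟨hne, hiff⟩ := ih
      have hjw : J (idx N t) = (A t : Fin n) ∨ J (idx N t) = (B t : Fin n) :=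
        (hiff (J (idx N t))).mp ((hword (idx N t) _).mpr (Or.inl rfl))
      have hOw : O (idx N t) = (A t : Fin n) ∨ O (idx N t) = (B t : Fin n) :=
        (hiff (O (idx N t))).mp ((hword (idx N t) _).mpr (Or.inr rfl))
      rw [idx_succ]
      by_cases hc : ((A t : Fin n) = J (idx N t))
      · obtain ⟨e1, e2⟩ := hstep_pos t hc
        have hOB : O (idx N t) = (B t : Fin n) := by
          rcases hOw with h|h
          · exact absurd (h.trans hc) (hOJ _)
          · exact h
        have rA : ((A (t+1) : ℤ) : Fin n) = J (idx N t) + 1 := by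
          rw [e1]; push_cast; rw [hc]
        have rB : ((B (t+1) : ℤ) : Fin n) = (B t : Fin n) := by rw [e2]
        constructor
        · rw [rA, rB, ← hOB]
          intro h; exact hOJ1 _ h.symm
        · intro x
          rw [rA, rB, ← hOB]
          exact htr (idx N t) x
      · obtain ⟨e1, e2⟩ := hstep_neg t hc
        have hjB : J (idx N t) = (B t : Fin n) := by
          rcases hjw with h|h
          · exact absurd h.symm hc
          · exact h
        have hOA : O (idx N t) = (A t : Fin n) := by
          rcases hOw with h|h
          · exact h
          · exact absurd (h.trans hjB.symm) (hOJ _)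
        have rA : ((A (t+1) : ℤ) : Fin n) = (A t : Fin n) := by rw [e1]
        have rB : ((B (t+1) : ℤ) : Fin n) = J (idx N t) + 1 := by
          rw [e2]; push_cast; rw [hjB]
        constructor
        · rw [rA, rB, ← hOA]
          exact hOJ1 _
        · intro x
          rw [rA, rB, ← hOA]
          rw [htr (idx N t) x]
          exact or_comm
      -- done invariant
  have hviol : ∀ t : ℕ, ((A (t + 2*n) : Fin n) = (A t : Fin n) ∨ (A (t + 2*n) : Fin n) = (B t : Fin n)) → False := by
    intro t hcase
    have hres2n : (((n:ℕ) : ℤ) : Fin n) = 0 := by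
      rw [Int.cast_natCast]
      exact CharP.cast_eq_zero (Fin n) n
    have hsum1 : ((A (t+2*n) : ℤ) : Fin n) + ((B (t+2*n) : ℤ) : Fin n)
        = ((A t : ℤ) : Fin n) + ((B t : ℤ) : Fin n) := by
      have e1 := hsum (t + 2*n)
      have e2 := hsum t
      have e3 : A (t+2*n) + B (t+2*n) = A t + B t + 2*(n:ℤ) := by push_cast at e1 e2 ⊢; linarith
      calc ((A (t+2*n) : ℤ) : Fin n) + ((B (t+2*n) : ℤ) : Fin n)
          = ((A (t+2*n) + B (t+2*n) : ℤ) : Fin n) := by push_cast; ring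
        _ = ((A t + B t + 2*(n:ℤ) : ℤ) : Fin n) := by rw [e3]
        _ = ((A t : ℤ) : Fin n) + ((B t : ℤ) : Fin n) := by push_cast [CharP.cast_eq_zero]; ring
    have hgeq : g (idx N (t + 2*n)) = g (idx N t) := by
      funext x
      have h1 := (hInv (t + 2*n)).2 x
      have h2 := (hInv t).2 x
      rcases hcase with hAA | hAB
      · have hBB : ((B (t+2*n) : ℤ) : Fin n) = (B t : Fin n) := by
          rw [hAA] at hsum1; exact add_left_cancel hsum1
        rw [hAA, hBB] at h1
        cases hx1 : g (idx N (t + 2*n)) x <;> cases hx2 : g (idx N t) x <;> simp_all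
      · have hBA : ((B (t+2*n) : ℤ) : Fin n) = (A t : Fin n) := by
          rw [hAB] at hsum1
          have := hsum1
          rw [add_comm ((B t : ℤ) : Fin n) ] at this
          linear_combination hsum1
        rw [hAB, hBA, or_comm] at h1
        cases hx1 : g (idx N (t + 2*n)) x <;> cases hx2 : g (idx N t) x <;> simp_all
    have hidx : idx N (t + 2*n) = idx N t := hdist hgeq
    have hmod : (t + 2*n) % N = t % N := congrArg Fin.val hidx
    have hdvd : N ∣ 2*n := by
      have hmeq : t ≡ t + 2*n [MOD N] := hmod.symm
      have := (Nat.modEq_iff_dvd' (Nat.le_add_right t (2*n))).mp hmeq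
      simpa using this
    have : N ≤ 2*n := Nat.le_of_dvd (by positivity) hdvd
    omega
  -- f and its step bounds
  set f : ℕ → ℤ := fun t => A (t + 2*n) - A t with hf
  have hfup : ∀ t, f (t+1) ≤ f t + 1 := by
    intro t
    have e : t + 1 + 2*n = (t + 2*n) + 1 := by omega
    have h1 := hdich (t + 2*n)
    have h2 := hdich t
    simp only [hf]
    rw [e]
    rcases h1 with ⟨a1,_⟩|⟨a1,_⟩ <;> rcases h2 with ⟨a2,_⟩|⟨a2,_⟩ <;> rw [a1, a2] <;> omega
  have hfdown : ∀ t, f t ≤ f (t+1) + 1 := by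
    intro t
    have e : t + 1 + 2*n = (t + 2*n) + 1 := by omega
    have h1 := hdich (t + 2*n)
    have h2 := hdich t
    simp only [hf]
    rw [e]
    rcases h1 with ⟨a1,_⟩|⟨a1,_⟩ <;> rcases h2 with ⟨a2,_⟩|⟨a2,_⟩ <;> rw [a1, a2] <;> omega
  have hfviol : ∀ t, (n:ℤ) ∣ f t → False := by
    intro t hdvd
    exact hviol t (Or.inl ((res_eq_iff n _ _).mpr hdvd))
  -- monodromy
  have hNidx : idx N N = idx N 0 := by
    have : idx N (0 + N) = idx N 0 := idx_add_period N 0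
    simpa using this
  have hmono : (((A N : ℤ) : Fin n) = (A 0 : Fin n) ∧ ((B N : ℤ) : Fin n) = (B 0 : Fin n)) ∨
               (((A N : ℤ) : Fin n) = (B 0 : Fin n) ∧ ((B N : ℤ) : Fin n) = (A 0 : Fin n)) := by
    have h1 := (hInv N).2
    have h0 := (hInv 0).2
    have hANword : g (idx N 0) ((A N : Fin n)) = true := by
      rw [← hNidx]; exact (h1 _).mpr (Or.inl rfl)
    have hBNword : g (idx N 0) ((B N : Fin n)) = true := by
      rw [← hNidx]; exact (h1 _).mpr (Or.inr rfl)
    rcases (h0 _).mp hANword with hA0 | hB0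
    · left; refine ⟨hA0, ?_⟩
      rcases (h0 _).mp hBNword with h | h
      · exact absurd (hA0.trans h.symm) (hInv N).1
      · exact h
    · right; refine ⟨hB0, ?_⟩
      rcases (h0 _).mp hBNword with h | h
      · exact h
      · exact absurd (hB0.trans h.symm) (hInv N).1
  rcases hmono with ⟨hA0, hB0⟩ | ⟨hswA, hswB⟩
  · -- NO SWAP CASE
    set dA : ℤ := A N - A 0 with hdA
    have hper : ∀ t, A (t + N) = A t + dA ∧ B (t + N) = B t + (B N - B 0) := by
      intro t; induction t with
      | zero =>
        constructor
        · rw [Nat.zero_add, hdA]; ring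
        · rw [Nat.zero_add]; ring
      | succ t ih =>
        obtain ⟨ih1, ih2⟩ := ih
        have hresdA : ((dA : ℤ) : Fin n) = 0 := by
          rw [hdA]; push_cast; rw [sub_eq_zero]; exact hA0
        have hresA : ((A (t+N) : ℤ) : Fin n) = (A t : Fin n) := by
          rw [ih1]; push_cast; rw [show ((dA : ℤ) : Fin n) = 0 from hresdA]; ring
        have hidxt : idx N (t + N) = idx N t := idx_add_period N t
        have eassoc : t + 1 + N = (t + N) + 1 := by omega
        by_cases hc : ((A t : Fin n) = J (idx N t))
        · have hc' : ((A (t+N) : Fin n) = J (idx N (t+N))) := by rw [hresA, hidxt]; exact hc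
          obtain ⟨f1, f2⟩ := hstep_pos _ hc'
          obtain ⟨g1, g2⟩ := hstep_pos _ hc
          constructor
          · rw [eassoc, f1, g1, ih1]; ring
          · rw [eassoc, f2, g2, ih2]
        · have hc' : ¬((A (t+N) : Fin n) = J (idx N (t+N))) := by rw [hresA, hidxt]; exact hc
          obtain ⟨f1, f2⟩ := hstep_neg _ hc'
          obtain ⟨g1, g2⟩ := hstep_neg _ hc
          constructor
          · rw [eassoc, f1, g1, ih1]
          · rw [eassoc, f2, g2, ih2]; ring
    have hdAdvd : (n:ℤ) ∣ dA := by rw [hdA]; exact (res_eq_iff n _ _).mp hA0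
    by_cases h2d : 2 * dA = (N : ℤ)
    · -- balanced case: sum argument
      have hfper : f N = f 0 := by
        simp only [hf]
        have e : N + 2*n = (0 + 2*n) + N := by omega
        have e0 : N = 0 + N := by omega
        rw [e, (hper _).1]
        conv_lhs => rw [e0, (hper 0).1]
        simp only [Nat.zero_add]
        ring
      have hfne : ∀ t, f t ≠ (n:ℤ) := by
        intro t h
        exact hfviol t (by rw [h])
      have hsplit : (∀ t, t ≤ N → f t < n) ∨ (∀ t, t ≤ N → (n:ℤ) < f t) := by
        by_contra hcon
        push_neg at hcon
        obtain ⟨⟨t1, ht1, ht1'⟩, ⟨t2, ht2, ht2'⟩⟩ := hcon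
        have h1 : (n:ℤ) < f t1 := lt_of_le_of_ne ht1' (Ne.symm (hfne t1))
        have h2 : f t2 < n := lt_of_le_of_ne ht2' (hfne t2)
        rcases le_total t1 t2 with h | h
        · obtain ⟨t, _, _, ht⟩ := ivt_down' f hfdown n t1 t2 h (le_of_lt h1) (le_of_lt h2)
          exact hfne t ht
        · obtain ⟨t, _, _, ht⟩ := ivt_up' f hfup n t2 t1 h (le_of_lt h2) (le_of_lt h1)
          exact hfne t ht
      -- sum identity
      have hsumid : ∀ M : ℕ, (∑ t ∈ Finset.range M, f t) =
          (∑ u ∈ Finset.range (2*n), A (M + u)) - (∑ u ∈ Finset.range (2*n), A u) := by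
        intro M; induction M with
        | zero => simp
        | succ M ih =>
          rw [Finset.sum_range_succ, ih]
          have htel : (∑ u ∈ Finset.range (2*n), (A (M + (u+1)) - A (M + u))) = A (M + 2*n) - A (M + 0) := by
            exact Finset.sum_range_sub (fun u => A (M + u)) (2*n)
          have hrw : ∀ u, A (M + 1 + u) = A (M + (u+1)) := by
            intro u; congr 1; omega
          have hsplit2 : (∑ u ∈ Finset.range (2*n), A (M + 1 + u))
              = (∑ u ∈ Finset.range (2*n), A (M + u)) + (A (M + 2*n) - A (M + 0)) := by
            rw [← htel, ← Finset.sum_add_distrib]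
            apply Finset.sum_congr rfl
            intro u _
            rw [hrw u]; ring
          rw [hsplit2]
          simp only [hf, Nat.add_zero]
          ring
      have hS : (∑ t ∈ Finset.range N, f t) = 2*n * dA := by
        rw [hsumid N]
        have hrw : ∀ u, A (N + u) = A u + dA := by
          intro u
          rw [show N + u = u + N by omega]
          exact (hper u).1
        rw [Finset.sum_congr rfl (fun u _ => hrw u), Finset.sum_add_distrib,
          Finset.sum_const, Finset.card_range]
        push_cast; ring
      rcases hsplit with hlt | hgt
      · have hle : (∑ t ∈ Finset.range N, f t) ≤ (∑ _t ∈ Finset.range N, ((n:ℤ) - 1)) := by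
          apply Finset.sum_le_sum
          intro t ht
          have := hlt t (le_of_lt (Finset.mem_range.mp ht))
          omega
        rw [hS, Finset.sum_const, Finset.card_range, nsmul_eq_mul] at hle
        have h2 : 2*(n:ℤ)*dA = (n:ℤ)*N := by rw [← h2d]; ring
        rw [h2] at hle
        have hNz : (0:ℤ) < N := by exact_mod_cast hNpos
        nlinarith
      · have hle : (∑ _t ∈ Finset.range N, ((n:ℤ) + 1)) ≤ (∑ t ∈ Finset.range N, f t) := by
          apply Finset.sum_le_sum
          intro t ht
          have := hgt t (le_of_lt (Finset.mem_range.mp ht))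
          omega
        rw [hS, Finset.sum_const, Finset.card_range, nsmul_eq_mul] at hle
        have h2 : 2*(n:ℤ)*dA = (n:ℤ)*N := by rw [← h2d]; ring
        rw [h2] at hle
        have hNz : (0:ℤ) < N := by exact_mod_cast hNpos
        nlinarith
    · -- drift case
      set gi : ℕ → ℤ := fun t => A (t + 2*n) + A t - (A 0 + B 0) - t with hgi
      have hgviol : ∀ t, (n:ℤ) ∣ gi t → False := by
        intro t hdvd
        apply hviol t
        right
        rw [res_eq_iff]
        have hBt : B t = A 0 + B 0 + t - A t := by
          have := hsum t; linarith
        rw [hBt]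
        have : A (t + 2*n) - (A 0 + B 0 + (t:ℤ) - A t) = gi t := by simp only [hgi]; ring
        rw [this]; exact hdvd
      have hgup : ∀ t, gi (t+1) ≤ gi t + 1 := by
        intro t
        have e : t + 1 + 2*n = (t + 2*n) + 1 := by omega
        have h1 := hdich (t + 2*n)
        have h2 := hdich t
        simp only [hgi]
        rw [e]
        rcases h1 with ⟨a1,_⟩|⟨a1,_⟩ <;> rcases h2 with ⟨a2,_⟩|⟨a2,_⟩ <;> rw [a1, a2] <;> push_cast <;> omega
      have hgdown : ∀ t, gi t ≤ gi (t+1) + 1 := by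
        intro t
        have e : t + 1 + 2*n = (t + 2*n) + 1 := by omega
        have h1 := hdich (t + 2*n)
        have h2 := hdich t
        simp only [hgi]
        rw [e]
        rcases h1 with ⟨a1,_⟩|⟨a1,_⟩ <;> rcases h2 with ⟨a2,_⟩|⟨a2,_⟩ <;> rw [a1, a2] <;> push_cast <;> omega
      have hgper : ∀ t, gi (t + N) = gi t + (2*dA - N) := by
        intro t
        simp only [hgi]
        have e : t + N + 2*n = (t + 2*n) + N := by omega
        rw [e, (hper _).1, (hper _).1]
        push_cast; ring
      have hgiter : ∀ M t, gi (t + M*N) = gi t + M*(2*dA - N) := by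
        intro M
        induction M with
        | zero => intro t; simp
        | succ M ih =>
          intro t
          have e : t + (M+1)*N = (t + M*N) + N := by ring_nf
          rw [e, hgper, ih]
          push_cast; ring
      set d0 : ℤ := 2*dA - N with hd0
      have hd0ne : d0 ≠ 0 := sub_ne_zero.mpr h2d
      have hn0 : (0:ℤ) < n := by exact_mod_cast hnpos
      have hqe := Int.mul_ediv_add_emod (gi 0) n
      have hrem0 : 0 ≤ gi 0 % n := Int.emod_nonneg _ (by omega)
      have hrem1 : gi 0 % n < n := Int.emod_lt_of_pos _ hn0
      have hval : gi (n*N) = gi 0 + n * d0 := by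
        have h := hgiter n 0
        rw [Nat.zero_add] at h
        exact h
      rcases hd0ne.lt_or_gt with hneg | hpos
      · -- drift negative, go down to n * (gi 0 / n)
        have hvd : (n:ℤ) ∣ (n * (gi 0 / n)) := ⟨_, rfl⟩
        have hd1 : n * d0 ≤ -n := by nlinarith
        obtain ⟨t, _, _, ht⟩ := ivt_down' gi hgdown (n * (gi 0 / n)) 0 (n*N)
          (Nat.zero_le _) (by linarith) (by rw [hval]; linarith)
        exact hgviol t (ht ▸ hvd)
      · have hvd : (n:ℤ) ∣ (n * (gi 0 / n + 1)) := ⟨_, rfl⟩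
        have hd1 : (n:ℤ) ≤ n * d0 := by nlinarith
        have hring : (n:ℤ) * (gi 0 / n + 1) = n * (gi 0 / n) + n := by ring
        obtain ⟨t, _, _, ht⟩ := ivt_up' gi hgup (n * (gi 0 / n + 1)) 0 (n*N)
          (Nat.zero_le _) (by linarith) (by rw [hval]; linarith)
        exact hgviol t (ht ▸ hvd)
  · -- SWAP CASE
    set e1 : ℤ := A N - B 0 with he1
    set e2 : ℤ := B N - A 0 with he2
    have hper : ∀ t, A (t + N) = B t + e1 ∧ B (t + N) = A t + e2 := by
      intro t; induction t with
      | zero =>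
        constructor
        · rw [Nat.zero_add, he1]; ring
        · rw [Nat.zero_add, he2]; ring
      | succ t ih =>
        obtain ⟨ih1, ih2⟩ := ih
        have hrese1 : ((e1 : ℤ) : Fin n) = 0 := by
          rw [he1]; push_cast; rw [sub_eq_zero]; exact hswA
        have hresA : ((A (t+N) : ℤ) : Fin n) = (B t : Fin n) := by
          rw [ih1]; push_cast; rw [show ((e1 : ℤ) : Fin n) = 0 from hrese1]; ring
        have hidxt : idx N (t + N) = idx N t := idx_add_period N t
        have eassoc : t + 1 + N = (t + N) + 1 := by omega
        by_cases hc : ((A t : Fin n) = J (idx N t))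
        · have hc' : ¬((A (t+N) : Fin n) = J (idx N (t+N))) := by
            rw [hresA, hidxt, ← hc]
            intro h
            exact (hInv t).1 h.symm
          obtain ⟨f1, f2⟩ := hstep_neg _ hc'
          obtain ⟨g1, g2⟩ := hstep_pos _ hc
          constructor
          · rw [eassoc, f1, g2, ih1]
          · rw [eassoc, f2, g1, ih2]; ring
        · have hjB : J (idx N t) = (B t : Fin n) := by
            have hjw : J (idx N t) = (A t : Fin n) ∨ J (idx N t) = (B t : Fin n) :=
              ((hInv t).2 (J (idx N t))).mp ((hword (idx N t) _).mpr (Or.inl rfl))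
            rcases hjw with h|h
            · exact absurd h.symm hc
            · exact h
          have hc' : ((A (t+N) : Fin n) = J (idx N (t+N))) := by
            rw [hresA, hidxt, hjB]
          obtain ⟨f1, f2⟩ := hstep_pos _ hc'
          obtain ⟨g1, g2⟩ := hstep_neg _ hc
          constructor
          · rw [eassoc, f1, g2, ih1]; ring
          · rw [eassoc, f2, g1, ih2]
    have hfanti : f N = 2*n - f 0 := by
      simp only [hf]
      have e : N + 2*n = (0 + 2*n) + N := by omega
      have e0 : N = 0 + N := by omega
      rw [e, (hper _).1]
      conv_lhs => rw [e0, (hper 0).1]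
      have h1 := hsum (0 + 2*n)
      have h2 := hsum 0
      simp only [Nat.zero_add] at *
      push_cast at h1 h2 ⊢
      linarith
    rcases lt_trichotomy (f 0) (n:ℤ) with hlt | heq | hgt
    · have hge : (n:ℤ) ≤ f N := by omega
      obtain ⟨t, _, _, ht⟩ := ivt_up' f hfup n 0 N (by omega) (le_of_lt hlt) hge
      exact hfviol t (by rw [ht])
    · exact hfviol 0 (by rw [heq])
    · have hle : f N ≤ (n:ℤ) := by omega
      obtain ⟨t, _, _, ht⟩ := ivt_down' f hfdown n 0 N (by omega) (le_of_lt hgt) hle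
      exact hfviol t (by rw [ht])

end Stmt6Aux

theorem stmt_6 (n N : ℕ) [NeZero n] [NeZero N] (hn : 5 ≤ n)
    (g : Fin N → (Fin n → Bool))
    (hdist : Function.Injective g)
    (hw : ∀ i : Fin N, (Finset.univ.filter (fun j => g i j = true)).card = 2)
    (htrans : ∀ i : Fin N, LRMTrans (g i) (g (i + 1))) :
    N ≤ Nat.choose n 2 - (n - 3) * (n - 5) / 8 := by
  classical
  have hone : (1 : Fin n) ≠ 0 := by
    intro h
    have hv := congrArg Fin.val h
    have h1 : (1 : Fin n).val = 1 % n := rfl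
    have h0 : (0 : Fin n).val = 0 := rfl
    rw [h1, h0, Nat.mod_eq_of_lt (by omega)] at hv
    exact one_ne_zero hv
  have hex : ∀ i : Fin N, ∃ jo : Fin n × Fin n,
      (∀ x, g i x = true ↔ x = jo.1 ∨ x = jo.2) ∧ jo.2 ≠ jo.1 ∧ jo.2 ≠ jo.1 + 1 ∧
      (∀ x, g (i+1) x = true ↔ x = jo.1 + 1 ∨ x = jo.2) := by
    intro i
    obtain ⟨j, hj1, hj2, hj3, hj4, hj5⟩ := htrans i
    have hmem : j ∈ Finset.univ.filter (fun x => g i x = true) := by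
      simp [hj1]
    have hcard' : ((Finset.univ.filter (fun x => g i x = true)).erase j).card = 1 := by
      rw [Finset.card_erase_of_mem hmem, hw i]
    obtain ⟨o, ho⟩ := Finset.card_eq_one.mp hcard'
    have homem : o ∈ (Finset.univ.filter (fun x => g i x = true)).erase j := by
      rw [ho]; exact Finset.mem_singleton_self o
    have honej : o ≠ j := (Finset.mem_erase.mp homem).1
    have hog : g i o = true := by
      have h := (Finset.mem_erase.mp homem).2
      simpa using h
    have hiff : ∀ x : Fin n, g i x = true ↔ x = j ∨ x = o := by
      intro x
      constructor
      · intro hx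
        by_cases hxj : x = j
        · exact Or.inl hxj
        · right
          have hxm : x ∈ (Finset.univ.filter (fun y => g i y = true)).erase j := by
            rw [Finset.mem_erase]
            exact ⟨hxj, by simp [hx]⟩
          rw [ho] at hxm
          exact Finset.mem_singleton.mp hxm
      · rintro (rfl|rfl)
        · exact hj1
        · exact hog
    have honej1 : o ≠ j + 1 := by
      intro h
      rw [h] at hog
      rw [hog] at hj2
      exact Bool.noConfusion hj2
    have hj1ne : j + 1 ≠ j := by
      intro h
      apply hone
      have h2 : j + 1 = j + 0 := by rw [add_zero]; exact h
      exact add_left_cancel h2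
    have htri : ∀ x : Fin n, g (i+1) x = true ↔ x = j + 1 ∨ x = o := by
      intro x
      by_cases hx1 : x = j + 1
      · subst hx1
        simp [hj4]
      · by_cases hxj : x = j
        · subst hxj
          constructor
          · intro hx; rw [hj3] at hx; exact Bool.noConfusion hx
          · rintro (h|h)
            · exact absurd h (by exact fun hh => hj1ne hh.symm)
            · exact absurd h.symm honej
        · rw [hj5 x hxj hx1, hiff x]
          constructor
          · rintro (rfl|h)
            · exact absurd rfl hxj
            · exact Or.inr h
          · rintro (h|h)
            · exact absurd h hx1
            · exact Or.inr h
    exact ⟨(j, o), hiff, honej, honej1, htri⟩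
  choose jo hjo1 hjo2 hjo3 hjo4 using hex
  have hkey : ¬ (2*n < N) := by
    intro hN
    exact Stmt6Aux.key n N g hdist (fun i => (jo i).1) (fun i => (jo i).2) hjo1 hjo2 hjo3 hjo4 hN
  push_neg at hkey
  have harr : 2*n ≤ Nat.choose n 2 - (n - 3) * (n - 5) / 8 := by
    rw [Nat.choose_two_right]
    obtain ⟨m, rfl⟩ : ∃ m, n = m + 5 := ⟨n - 5, by omega⟩
    have h1 : (m+5) - 3 = m + 2 := by omega
    have h2 : (m+5) - 5 = m := by omega
    have h3 : (m+5) - 1 = m + 4 := by omega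
    rw [h1, h2, h3]
    have hdvd : 2 ∣ (m+5)*(m+4) := by
      rw [mul_comm]
      exact (Nat.even_mul_succ_self (m+4)).two_dvd
    have h2K : (m+5)*(m+4)/2 * 2 = (m+5)*(m+4) := Nat.div_mul_cancel hdvd
    have hq8 : (m+2)*m/8 * 8 ≤ (m+2)*m := Nat.div_mul_le_self _ _
    have e1 : (m+5)*(m+4) = m*m + 9*m + 20 := by ring
    have e2 : (m+2)*m = m*m + 2*m := by ring
    rw [e1] at h2K
    rw [e2] at hq8
    generalize hMM : m*m = MM at h2K hq8
    omega
  exact le_trans hkey harr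
end
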